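/- For every ε > 0 and Lebesgue-almost every x ∈ (0,θ), the inequality a_n(x) < n·(log n)^{1+ε} holds for all sufficiently large n ∈ ℕ₊. -/

import Mathlib

noncomputable section
open MeasureTheory Filter Set
open scoped ENNReal NNReal

namespace Theta

/-- θ = 1/√m -/
def th (m : ℕ) : ℝ := 1 / Real.sqrt m

/-- The θ-expansion map T_θ on [0,θ]. -/
def T (m : ℕ) (x : ℝ) : ℝ := if x = 0 then 0 else 1 / x - th m * ⌊1 / (x * th m)⌋₊

/-- The n-th digit a_n(x) (n ≥ 1), a_n(x) = a_1(T_θ^{n-1} x) with a_1(x) = ⌊1/(xθ)⌋. -/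
def a (m n : ℕ) (x : ℝ) : ℕ := ⌊1 / ((T m)^[n - 1] x * th m)⌋₊

/-- Ω: the irrationals in (0,θ). -/
def Omega (m : ℕ) : Set ℝ := {x | x ∈ Set.Ioo 0 (th m) ∧ Irrational x}

/-- Convergent numerators, shifted: `p m x (n+1)` is p_n(x), `p m x 0` is p_{-1} = 1. -/
def p (m : ℕ) (x : ℝ) : ℕ → ℝ
  | 0 => 1
  | 1 => 0
  | n + 2 => (a m (n + 1) x) * th m * p m x (n + 1) + p m x n

/-- Convergent denominators, shifted: `q m x (n+1)` is q_n(x), `q m x 0` is q_{-1} = 0. -/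
def q (m : ℕ) (x : ℝ) : ℕ → ℝ
  | 0 => 0
  | 1 => 1
  | n + 2 => (a m (n + 1) x) * th m * q m x (n + 1) + q m x n

section Aux

variable {m : ℕ}

lemma th_nonneg : 0 ≤ th m := by
  have : 0 ≤ Real.sqrt m := Real.sqrt_nonneg m
  unfold th; positivity

lemma m_pos (hm : 2 ≤ m) : (0:ℝ) < m := by exact_mod_cast Nat.lt_of_lt_of_le (by norm_num) hm

lemma th_pos (hm : 2 ≤ m) : 0 < th m := by
  have : (0:ℝ) < Real.sqrt m := Real.sqrt_pos.mpr (m_pos hm)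
  unfold th; positivity

lemma m_th_th (hm : 2 ≤ m) : (m : ℝ) * (th m * th m) = 1 := by
  have h : Real.sqrt m * Real.sqrt m = m := Real.mul_self_sqrt (m_pos hm).le
  have h2 : Real.sqrt m ≠ 0 := by nlinarith [m_pos hm]
  field_simp [th]
  rw [th, div_pow, one_pow, Real.sq_sqrt (m_pos hm).le]; exact mul_one_div_cancel (m_pos hm).ne'

lemma th_sq_le (hm : 2 ≤ m) : th m * th m ≤ 1/2 := by
  have h := m_th_th hm
  have h2 : (2:ℝ) ≤ m := by exact_mod_cast hm
  have h3 : 0 < th m := th_pos hm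
  nlinarith

lemma measurable_T : Measurable (T m) := by
  unfold T
  refine Measurable.ite (measurableSet_eq) measurable_const ?_
  have h1 : Measurable fun x : ℝ => ((⌊1 / (x * th m)⌋₊ : ℕ) : ℝ) :=
    Measurable.comp (measurable_from_top) ((measurable_id.mul_const (th m)).const_div 1).nat_floor
  exact (measurable_id.const_div 1).sub (h1.const_mul (th m))


/-- Main structural facts about one step of T on (0,θ). -/
lemma floor_spec (hm : 2 ≤ m) {x : ℝ} (hx : x ∈ Set.Ioo 0 (th m)) :
    m ≤ ⌊1 / (x * th m)⌋₊ ∧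
    (⌊1 / (x * th m)⌋₊ : ℝ) * th m ≤ 1 / x ∧
    1 / x < ((⌊1 / (x * th m)⌋₊ : ℝ) + 1) * th m := by
  obtain ⟨hx0, hxθ⟩ := hx
  have hθ := th_pos hm
  have hxθpos : 0 < x * th m := by positivity
  set t : ℝ := 1 / (x * th m) with ht
  have ht0 : 0 < t := by positivity
  have htm : (m : ℝ) < t := by
    rw [ht, lt_div_iff₀ hxθpos]
    have : x * th m < th m * th m := by nlinarith
    nlinarith [m_th_th hm]
  have hfl : (⌊t⌋₊ : ℝ) ≤ t := Nat.floor_le ht0.le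
  have hfl2 : t < (⌊t⌋₊ : ℝ) + 1 := Nat.lt_floor_add_one t
  have hmf : m ≤ ⌊t⌋₊ := Nat.le_floor htm.le
  have htx : t * th m = 1 / x := by
    rw [ht]; field_simp
  refine ⟨hmf, ?_, ?_⟩
  · rw [← htx]; nlinarith
  · rw [← htx]; nlinarith

lemma T_eq (hm : 2 ≤ m) {x : ℝ} (hx : x ∈ Set.Ioo 0 (th m)) :
    T m x = 1 / x - th m * ⌊1 / (x * th m)⌋₊ := by
  rw [T, if_neg (ne_of_gt hx.1)]

lemma T_mem (hm : 2 ≤ m) {x : ℝ} (hx : x ∈ Set.Ioo 0 (th m)) :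
    T m x ∈ Set.Ico 0 (th m) := by
  obtain ⟨-, h1, h2⟩ := floor_spec hm hx
  rw [T_eq hm hx]
  constructor
  · nlinarith
  · nlinarith

/-- The preimage of an interval: exact formula. -/
lemma preimage_Ioo (hm : 2 ≤ m) {b c : ℝ} (hb : 0 ≤ b) (hbc : b < c) (hc : c ≤ th m) :
    T m ⁻¹' (Set.Ioo b c) ∩ Set.Ioo 0 (th m) =
      ⋃ j : ℕ, Set.Ioo (1 / (c + ((m + j : ℕ) : ℝ) * th m)) (1 / (b + ((m + j : ℕ) : ℝ) * th m)) := by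
  have hθ := th_pos hm
  have hmθ : (m : ℝ) * th m * th m = 1 := by rw [mul_assoc]; exact m_th_th hm
  ext x
  simp only [Set.mem_inter_iff, Set.mem_preimage, Set.mem_iUnion, Set.mem_Ioo]
  constructor
  · rintro ⟨⟨hTb, hTc⟩, hx⟩
    obtain ⟨hmk, h1, h2⟩ := floor_spec hm hx
    set k := ⌊1 / (x * th m)⌋₊ with hk
    have hTx : T m x = 1 / x - th m * k := T_eq hm hx
    have hl : b + (k : ℝ) * th m < 1 / x := by rw [hTx] at hTb; nlinarith
    have hu : 1 / x < c + (k : ℝ) * th m := by rw [hTx] at hTc; nlinarith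
    have hkm' : (m:ℝ) ≤ (k:ℝ) := by exact_mod_cast hmk
    have hbk : 0 < b + (k : ℝ) * th m := by
      nlinarith [mul_le_mul_of_nonneg_right hkm' hθ.le, m_pos hm]
    refine ⟨k - m, ?_, ?_⟩ <;>
      rw [show ((m + (k - m) : ℕ) : ℝ) = (k : ℝ) by congr 1; omega]
    · have := one_div_lt_one_div_of_lt (one_div_pos.mpr hx.1) hu
      rwa [one_div_one_div] at this
    · have := one_div_lt_one_div_of_lt hbk hl
      rwa [one_div_one_div] at this
  · rintro ⟨j, hxl, hxu⟩
    set k : ℕ := m + j with hkdef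
    have hkm : (m:ℝ) ≤ (k:ℝ) := by exact_mod_cast Nat.le_add_right m j
    have hbk : 0 < b + (k : ℝ) * th m := by
      nlinarith [mul_le_mul_of_nonneg_right hkm hθ.le, m_pos hm]
    have hck : 0 < c + (k : ℝ) * th m := by nlinarith
    have hx0 : 0 < x := lt_trans (by positivity) hxl
    -- invert the bounds
    have hl : b + (k : ℝ) * th m < 1 / x := by
      have := one_div_lt_one_div_of_lt hx0 hxu
      rwa [one_div_one_div] at this
    have hu : 1 / x < c + (k : ℝ) * th m := by
      have := one_div_lt_one_div_of_lt (by positivity) hxl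
      rwa [one_div_one_div] at this
    have hxθ : x < th m := by
      have hmth : (m:ℝ) * th m = 1 / th m := by
        rw [eq_div_iff (ne_of_gt hθ)]; exact hmθ
      have h1θ : (1:ℝ)/th m ≤ (k:ℝ) * th m := by
        linarith [mul_le_mul_of_nonneg_right hkm hθ.le]
      have : 1 / th m < 1 / x := by
        calc 1 / th m ≤ (k:ℝ) * th m := h1θ
          _ ≤ b + (k:ℝ) * th m := by linarith
          _ < 1 / x := hl
      have := one_div_lt_one_div_of_lt (by positivity : (0:ℝ) < 1/th m) this
      rwa [one_div_one_div, one_div_one_div] at this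
    have hxmem : x ∈ Set.Ioo 0 (th m) := ⟨hx0, hxθ⟩
    -- compute the floor
    have ht : 1 / (x * th m) = (1/x) * (1/ th m) := by field_simp
    have hfloor : ⌊1 / (x * th m)⌋₊ = k := by
      rw [Nat.floor_eq_iff (by positivity)]
      constructor
      · rw [ht]
        have : (k:ℝ) * th m * (1/th m) ≤ (1/x) * (1/th m) := by
          apply mul_le_mul_of_nonneg_right _ (by positivity)
          linarith
        calc (k:ℝ) = (k:ℝ) * th m * (1/th m) := by field_simp
          _ ≤ _ := this
      · rw [ht]
        have hcc : 1/x < ((k:ℝ)+1) * th m := by nlinarith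
        have : (1/x) * (1/th m) < ((k:ℝ)+1) * th m * (1/th m) := by
          apply mul_lt_mul_of_pos_right hcc (by positivity)
        calc (1/x) * (1/th m) < ((k:ℝ)+1) * th m * (1/th m) := this
          _ = (k:ℝ)+1 := by field_simp
    refine ⟨?_, hxmem⟩
    rw [T_eq hm hxmem, hfloor]
    constructor
    · nlinarith
    · nlinarith


/-- The invariant density measure (unnormalized). -/
def mu (m : ℕ) : Measure ℝ :=
  (volume.restrict (Set.Ioo 0 (th m))).withDensity (fun x => ENNReal.ofReal (1/(1 + th m * x)))

lemma mu_apply {s : Set ℝ} (hs : MeasurableSet s) :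
    mu m s = ∫⁻ x in s ∩ Set.Ioo 0 (th m), ENNReal.ofReal (1/(1 + th m * x)) ∂volume := by
  rw [mu, withDensity_apply _ hs, Measure.restrict_restrict hs]

lemma mu_inter_Ioo {s : Set ℝ} (hs : MeasurableSet s) :
    mu m s = mu m (s ∩ Set.Ioo 0 (th m)) := by
  rw [mu_apply hs, mu_apply (hs.inter measurableSet_Ioo), Set.inter_assoc, Set.inter_self]

lemma mu_Ioo (hm : 2 ≤ m) {u v : ℝ} (hu : 0 ≤ u) (huv : u ≤ v) (hv : v ≤ th m) :
    mu m (Set.Ioo u v) =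
      ENNReal.ofReal ((Real.log (1 + th m * v) - Real.log (1 + th m * u)) / th m) := by
  have hθ := th_pos hm
  have hsub : Set.Ioo u v ⊆ Set.Ioo 0 (th m) := fun x hx => ⟨lt_of_le_of_lt hu hx.1, lt_of_lt_of_le hx.2 hv⟩
  have hpos : ∀ x ∈ Set.Icc u v, 0 < 1 + th m * x := by
    intro x hx; nlinarith [hx.1]
  rw [mu_apply measurableSet_Ioo, Set.inter_eq_left.mpr hsub]
  have hint : IntegrableOn (fun x => 1/(1 + th m * x)) (Set.Ioo u v) volume := by
    apply (ContinuousOn.integrableOn_Icc _).mono_set Set.Ioo_subset_Icc_self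
    exact ContinuousOn.div continuousOn_const
      (by fun_prop) (fun x hx => ne_of_gt (hpos x hx))
  rw [← ofReal_integral_eq_lintegral_ofReal hint]
  · congr 1
    rw [← integral_Ioc_eq_integral_Ioo, ← intervalIntegral.integral_of_le huv]
    have hderiv : ∀ x ∈ Set.uIcc u v, HasDerivAt (fun y => Real.log (1 + th m * y) / th m)
        (1/(1 + th m * x)) x := by
      intro x hx
      rw [Set.uIcc_of_le huv] at hx
      have hp := hpos x hx
      have h1 : HasDerivAt (fun y : ℝ => 1 + th m * y) (th m) x := by
        simpa using ((hasDerivAt_id x).const_mul (th m)).const_add 1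
      have h2 := (Real.hasDerivAt_log (ne_of_gt hp)).comp x h1
      have h3 := h2.div_const (th m)
      rw [show (1:ℝ)/(1 + th m * x) = (1 + th m * x)⁻¹ * th m / th m by
        rw [mul_div_assoc, div_self hθ.ne', mul_one, one_div]]
      exact h3
    rw [intervalIntegral.integral_eq_sub_of_hasDerivAt hderiv]
    · ring
    · apply ContinuousOn.intervalIntegrable
      rw [Set.uIcc_of_le huv]
      exact ContinuousOn.div continuousOn_const (by fun_prop) (fun x hx => ne_of_gt (hpos x hx))
  · filter_upwards [ae_restrict_mem measurableSet_Ioo] with x hx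
    have := hpos x (Set.Ioo_subset_Icc_self hx)
    positivity

lemma mu_univ_eq (hm : 2 ≤ m) :
    mu m Set.univ = ENNReal.ofReal (Real.log (1 + th m * th m) / th m) := by
  rw [mu_apply MeasurableSet.univ, Set.univ_inter, ← Set.inter_eq_left.mpr (le_refl (Set.Ioo 0 (th m))), ← mu_apply measurableSet_Ioo]
  have := mu_Ioo hm (le_refl 0) (th_pos hm).le (le_refl (th m))
  simpa using this

instance (m : ℕ) : IsFiniteMeasure (mu m) := by
  constructor
  rw [mu_apply MeasurableSet.univ, Set.univ_inter]
  calc ∫⁻ x in Set.Ioo 0 (th m), ENNReal.ofReal (1/(1 + th m * x)) ∂volume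
      ≤ ∫⁻ _x in Set.Ioo 0 (th m), 1 ∂volume := by
        apply lintegral_mono_ae
        filter_upwards [ae_restrict_mem measurableSet_Ioo] with x hx
        apply ENNReal.ofReal_le_one.mpr
        have h1 : (0:ℝ) ≤ th m * x := mul_nonneg th_nonneg hx.1.le
        rw [div_le_one (by linarith)]
        linarith
    _ = volume (Set.Ioo 0 (th m)) := by rw [setLIntegral_one]
    _ < ⊤ := measure_Ioo_lt_top


lemma mu_le_volume {s : Set ℝ} (hs : MeasurableSet s) :
    mu m s ≤ volume (s ∩ Set.Ioo 0 (th m)) := by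
  rw [mu_apply hs]
  calc ∫⁻ x in s ∩ Set.Ioo 0 (th m), ENNReal.ofReal (1/(1 + th m * x)) ∂volume
      ≤ ∫⁻ _x in s ∩ Set.Ioo 0 (th m), 1 ∂volume := by
        apply lintegral_mono_ae
        filter_upwards [ae_restrict_mem (hs.inter measurableSet_Ioo)] with x hx
        apply ENNReal.ofReal_le_one.mpr
        have h1 : (0:ℝ) ≤ th m * x := mul_nonneg th_nonneg hx.2.1.le
        rw [div_le_one (by linarith)]
        linarith
    _ = volume (s ∩ Set.Ioo 0 (th m)) := by rw [setLIntegral_one]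

lemma mu_Iic_le (u : ℝ) : mu m (Set.Iic u) ≤ ENNReal.ofReal u := by
  calc mu m (Set.Iic u) ≤ volume (Set.Iic u ∩ Set.Ioo 0 (th m)) := mu_le_volume measurableSet_Iic
    _ ≤ volume (Set.Ioc 0 u) := by
        apply measure_mono
        rintro x ⟨h1, h2, -⟩
        exact ⟨h2, h1⟩
    _ = ENNReal.ofReal u := by rw [Real.volume_Ioc]; norm_num

lemma lam_le_two_mu (hm : 2 ≤ m) (s : Set ℝ) :
    volume.restrict (Set.Ioo 0 (th m)) s ≤ 2 * mu m s := by
  have hθ := th_pos hm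
  have key : ∀ t : Set ℝ, MeasurableSet t →
      volume.restrict (Set.Ioo 0 (th m)) t ≤ 2 * mu m t := by
    intro t ht
    rw [Measure.restrict_apply ht, mu_apply ht]
    have h2 : volume (t ∩ Set.Ioo 0 (th m)) = ∫⁻ _x in t ∩ Set.Ioo 0 (th m), 1 ∂volume := by
      rw [setLIntegral_one]
    rw [h2, ← lintegral_const_mul' _ _ (by norm_num : (2:ℝ≥0∞) ≠ ⊤)]
    apply lintegral_mono_ae
    filter_upwards [ae_restrict_mem (ht.inter measurableSet_Ioo)] with x hx
    have hx1 : th m * x ≤ 1 := by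
      have := th_sq_le hm
      nlinarith [hx.2.1, hx.2.2]
    have hhalf : (1:ℝ)/2 ≤ 1/(1 + th m * x) := by
      have h1 : (0:ℝ) < 1 + th m * x := by nlinarith [mul_nonneg (th_nonneg (m := m)) hx.2.1.le]
      rw [div_le_div_iff₀ (by norm_num) h1]
      linarith
    calc (1:ℝ≥0∞) = ENNReal.ofReal 2 * ENNReal.ofReal (1/2) := by
          rw [← ENNReal.ofReal_mul (by norm_num)]; norm_num
      _ = 2 * ENNReal.ofReal (1/2) := by norm_num
      _ ≤ 2 * ENNReal.ofReal (1/(1 + th m * x)) := by gcongr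
  calc volume.restrict (Set.Ioo 0 (th m)) s
      ≤ volume.restrict (Set.Ioo 0 (th m)) (toMeasurable (mu m) s) :=
        measure_mono (subset_toMeasurable _ _)
    _ ≤ 2 * mu m (toMeasurable (mu m) s) := key _ (measurableSet_toMeasurable _ _)
    _ = 2 * mu m s := by rw [measure_toMeasurable]


lemma log_one_add_helper (hθ : 0 < th m) {c : ℝ} (hc : 0 < c) :
    Real.log (1 + th m * (1/c)) = Real.log (c + th m) - Real.log c := by
  have h1 : 1 + th m * (1/c) = (c + th m)/c := by field_simp
  rw [h1, Real.log_div (by positivity) (ne_of_gt hc)]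

lemma mu_preimage_Ioo (hm : 2 ≤ m) {b c : ℝ} (hb : 0 ≤ b) (hbc : b < c) (hc : c ≤ th m) :
    mu m (T m ⁻¹' Set.Ioo b c) = mu m (Set.Ioo b c) := by
  have hθ := th_pos hm
  have hmθ : (m : ℝ) * th m * th m = 1 := by rw [mul_assoc]; exact m_th_th hm
  have hmth : (m:ℝ) * th m = 1 / th m := by
    rw [eq_div_iff (ne_of_gt hθ)]; exact hmθ
  set θ := th m with hθdef
  set D : ℕ → ℝ := fun j => ((m + j : ℕ) : ℝ) * θ with hD
  have hDge : ∀ j, 1/θ ≤ D j := by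
    intro j
    have : (m:ℝ) ≤ ((m + j : ℕ) : ℝ) := by exact_mod_cast Nat.le_add_right m j
    calc 1/θ = (m:ℝ) * θ := hmth.symm
      _ ≤ D j := by rw [hD]; exact mul_le_mul_of_nonneg_right this hθ.le
  have hDpos : ∀ j, 0 < D j := fun j => lt_of_lt_of_le (by positivity) (hDge j)
  have hbD : ∀ j, 0 < b + D j := fun j => by nlinarith [hDpos j]
  have hcD : ∀ j, 0 < c + D j := fun j => by nlinarith [hDpos j]
  have hDsucc : ∀ j, D (j+1) = D j + θ := by
    intro j; rw [hD]; push_cast; ring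
  set u : ℕ → ℝ := fun j => 1/(c + D j) with hu
  set v : ℕ → ℝ := fun j => 1/(b + D j) with hv
  have hu0 : ∀ j, 0 ≤ u j := fun j => le_of_lt (one_div_pos.mpr (hcD j))
  have huv : ∀ j, u j ≤ v j := fun j =>
    one_div_le_one_div_of_le (hbD j) (by linarith)
  have hvθ : ∀ j, v j ≤ θ := by
    intro j
    rw [hv, div_le_iff₀ (hbD j)]
    calc (1:ℝ) = θ * (1/θ) := by field_simp
      _ ≤ θ * (b + D j) := by
          apply mul_le_mul_of_nonneg_left _ hθ.le
          linarith [hDge j]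
  -- the preimage rewriting
  have hTmeas : MeasurableSet (T m ⁻¹' Set.Ioo b c) := measurable_T measurableSet_Ioo
  rw [mu_inter_Ioo hTmeas, preimage_Ioo hm hb hbc hc]
  have hdisj : Pairwise (Function.onFun Disjoint (fun j => Set.Ioo (u j) (v j))) := by
    have hmono : ∀ i j : ℕ, i < j → v j ≤ u i := by
      intro i j hij
      have h1 : (i:ℝ) + 1 ≤ (j:ℝ) := by exact_mod_cast hij
      have h2 : D i + θ ≤ D j := by
        rw [hD]; push_cast; nlinarith
      apply one_div_le_one_div_of_le (hcD i)
      linarith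
    intro i j hij
    rcases lt_or_gt_of_ne hij with h | h
    · exact Set.disjoint_left.mpr fun x hxi hxj =>
        absurd (lt_of_lt_of_le hxj.2 (hmono i j h)) (not_lt.mpr hxi.1.le)
    · exact Set.disjoint_left.mpr fun x hxi hxj =>
        absurd (lt_of_lt_of_le hxi.2 (hmono j i h)) (not_lt.mpr hxj.1.le)
  rw [measure_iUnion hdisj (fun j => measurableSet_Ioo)]
  -- each term
  have hterm : ∀ j, mu m (Set.Ioo (u j) (v j)) =
      ENNReal.ofReal ((Real.log (1 + θ * v j) - Real.log (1 + θ * u j)) / θ) := by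
    intro j
    exact mu_Ioo hm (hu0 j) (huv j) (hvθ j)
  set g : ℕ → ℝ := fun j => (Real.log (c + D j) - Real.log (b + D j)) / θ with hg
  have htermg : ∀ j, (Real.log (1 + θ * v j) - Real.log (1 + θ * u j)) / θ = g j - g (j+1) := by
    intro j
    have h1 : Real.log (1 + θ * v j) = Real.log (b + D j + θ) - Real.log (b + D j) :=
      log_one_add_helper hθ (hbD j)
    have h2 : Real.log (1 + θ * u j) = Real.log (c + D j + θ) - Real.log (c + D j) :=
      log_one_add_helper hθ (hcD j)
    rw [h1, h2]
    simp only [hg]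
    rw [hDsucc j]
    ring_nf
  have hgnonneg : ∀ j, 0 ≤ g j - g (j+1) := by
    intro j
    rw [← htermg j]
    have : Real.log (1 + θ * u j) ≤ Real.log (1 + θ * v j) := by
      apply Real.log_le_log (by nlinarith [hu0 j])
      nlinarith [huv j]
    apply div_nonneg (by linarith) hθ.le
  -- limit of g
  have hgtend : Tendsto g atTop (nhds 0) := by
    have hub : ∀ j, g j ≤ ((c - b) / θ) / (b + D j) := by
      intro j
      have hlog : Real.log (c + D j) - Real.log (b + D j) ≤ (c - b)/(b + D j) := by
        rw [← Real.log_div (ne_of_gt (hcD j)) (ne_of_gt (hbD j))]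
        have h1 : (c + D j)/(b + D j) - 1 = (c - b)/(b + D j) := by
          rw [div_sub_one (hbD j).ne']; ring
        rw [← h1]
        exact Real.log_le_sub_one_of_pos (div_pos (hcD j) (hbD j))
      rw [hg]
      calc (Real.log (c + D j) - Real.log (b + D j))/θ ≤ ((c-b)/(b + D j))/θ := by gcongr
        _ = ((c - b) / θ) / (b + D j) := by ring
    have hlb : ∀ j, 0 ≤ g j := by
      intro j
      apply div_nonneg _ hθ.le
      have : Real.log (b + D j) ≤ Real.log (c + D j) := by
        apply Real.log_le_log (hbD j); linarith
      linarith
    have htendD : Tendsto (fun j : ℕ => b + D j) atTop atTop := by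
      apply tendsto_atTop_add_const_left
      rw [hD]
      apply Tendsto.atTop_mul_const hθ
      apply tendsto_natCast_atTop_atTop.comp
      simpa [Nat.add_comm] using tendsto_add_atTop_nat m
    have hbound : Tendsto (fun j : ℕ => ((c - b) / θ) / (b + D j)) atTop (nhds 0) :=
      Tendsto.div_atTop tendsto_const_nhds htendD
    exact squeeze_zero hlb hub hbound
  have hsum : HasSum (fun j => g j - g (j+1)) (g 0) := by
    rw [hasSum_iff_tendsto_nat_of_nonneg hgnonneg]
    have hts : ∀ n : ℕ, ∑ j ∈ Finset.range n, (g j - g (j+1)) = g 0 - g n :=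
      fun n => Finset.sum_range_sub' g n
    simp only [hts]
    simpa using tendsto_const_nhds.sub hgtend
  calc ∑' j, mu m (Set.Ioo (u j) (v j))
      = ∑' j, ENNReal.ofReal (g j - g (j+1)) := by
        apply tsum_congr; intro j; rw [hterm j, htermg j]
    _ = ENNReal.ofReal (∑' j, (g j - g (j+1))) :=
        (ENNReal.ofReal_tsum_of_nonneg hgnonneg hsum.summable).symm
    _ = ENNReal.ofReal (g 0) := by rw [hsum.tsum_eq]
    _ = mu m (Set.Ioo b c) := by
        rw [mu_Ioo hm hb hbc.le hc]
        congr 1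
        have hD0 : D 0 = 1/θ := by
          rw [hD]; simp; rw [← one_div, ← hmth]
        have hb0 : b + D 0 = (1+θ*b)/θ := by rw [hD0]; field_simp; ring
        have hc0 : c + D 0 = (1+θ*c)/θ := by rw [hD0]; field_simp; ring
        simp only [hg]
        rw [hb0, hc0, Real.log_div (by nlinarith) (ne_of_gt hθ),
          Real.log_div (by nlinarith) (ne_of_gt hθ)]
        ring


theorem T_invariance (hm : 2 ≤ m) : (mu m).map (T m) = mu m := by
  have hθ := th_pos hm
  have hT : Measurable (T m) := measurable_T
  have hfin : IsFiniteMeasure ((mu m).map (T m)) := by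
    constructor
    rw [Measure.map_apply hT MeasurableSet.univ, Set.preimage_univ]
    exact measure_lt_top _ _
  refine Measure.ext_of_Iic ((mu m).map (T m)) (mu m) (fun w => ?_)
  rw [Measure.map_apply hT measurableSet_Iic]
  rcases lt_or_ge w 0 with hw | hw
  · -- both sides zero
    have h1 : T m ⁻¹' Set.Iic w ∩ Set.Ioo 0 (th m) = ∅ := by
      ext x
      simp only [Set.mem_inter_iff, Set.mem_preimage, Set.mem_Iic, Set.mem_empty_iff_false,
        iff_false, not_and]
      intro hTx hx
      exact absurd (le_trans (T_mem hm hx).1 hTx) (not_le.mpr hw)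
    have h2 : Set.Iic w ∩ Set.Ioo 0 (th m) = ∅ := by
      ext x
      simp only [Set.mem_inter_iff, Set.mem_Iic, Set.mem_empty_iff_false, iff_false, not_and]
      intro hx hx2
      linarith [hx2.1]
    rw [mu_inter_Ioo (hT measurableSet_Iic), h1,
      mu_inter_Ioo measurableSet_Iic, h2]
  rcases lt_or_ge w (th m) with hwθ | hwθ
  · -- main case 0 ≤ w < θ
    have hsplit : T m ⁻¹' Set.Iic w ∩ Set.Ioo 0 (th m) =
        Set.Ioo 0 (th m) \ (T m ⁻¹' Set.Ioo w (th m) ∩ Set.Ioo 0 (th m)) := by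
      ext x
      simp only [Set.mem_inter_iff, Set.mem_preimage, Set.mem_Iic, Set.mem_diff, Set.mem_Ioo]
      constructor
      · rintro ⟨hTx, hx⟩
        exact ⟨hx, fun h => absurd hTx (not_le.mpr h.1.1)⟩
      · rintro ⟨hx, hn⟩
        refine ⟨?_, hx⟩
        by_contra hc
        exact hn ⟨⟨not_le.mp hc, (T_mem hm hx).2⟩, hx⟩
    have hA : MeasurableSet (T m ⁻¹' Set.Ioo w (th m) ∩ Set.Ioo 0 (th m)) :=
      (hT measurableSet_Ioo).inter measurableSet_Ioo
    have hAsub : T m ⁻¹' Set.Ioo w (th m) ∩ Set.Ioo 0 (th m) ⊆ Set.Ioo 0 (th m) :=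
      Set.inter_subset_right
    rw [mu_inter_Ioo (hT measurableSet_Iic), hsplit,
      measure_diff hAsub hA.nullMeasurableSet (measure_ne_top _ _)]
    have hP : mu m (T m ⁻¹' Set.Ioo w (th m) ∩ Set.Ioo 0 (th m)) = mu m (Set.Ioo w (th m)) := by
      rw [← mu_inter_Ioo (hT measurableSet_Ioo)]
      exact mu_preimage_Ioo hm hw hwθ (le_refl _)
    rw [hP]
    -- RHS
    have hRHS : mu m (Set.Iic w) = mu m (Set.Ioo 0 w) := by
      rw [mu_inter_Ioo measurableSet_Iic]
      have h1 : Set.Iic w ∩ Set.Ioo 0 (th m) = Set.Ioc 0 w := by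
        ext x
        simp only [Set.mem_inter_iff, Set.mem_Iic, Set.mem_Ioo, Set.mem_Ioc]
        constructor
        · rintro ⟨h1, h2, h3⟩; exact ⟨h2, h1⟩
        · rintro ⟨h1, h2⟩; exact ⟨h2, h1, lt_of_le_of_lt h2 hwθ⟩
      rw [h1]
      -- Ioc = Ioo up to measure-zero point
      have hsing : mu m {w} = 0 := by
        apply le_antisymm _ zero_le
        calc mu m {w} ≤ volume ({w} ∩ Set.Ioo 0 (th m)) := mu_le_volume (measurableSet_singleton w)
          _ ≤ volume {w} := measure_mono Set.inter_subset_left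
          _ = 0 := Real.volume_singleton
      apply le_antisymm
      · calc mu m (Set.Ioc 0 w) ≤ mu m (Set.Ioo 0 w ∪ {w}) := by
              apply measure_mono
              intro x hx
              rcases eq_or_lt_of_le hx.2 with h | h
              · exact Or.inr (by simp [h])
              · exact Or.inl ⟨hx.1, h⟩
          _ ≤ mu m (Set.Ioo 0 w) + mu m {w} := measure_union_le _ _
          _ = mu m (Set.Ioo 0 w) := by rw [hsing, add_zero]
      · exact measure_mono Set.Ioo_subset_Ioc_self
    rw [hRHS]
    -- arithmetic with the explicit formulas
    have e1 := mu_Ioo hm (le_refl 0) hθ.le (le_refl (th m))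
    have e2 := mu_Ioo hm hw hwθ.le (le_refl (th m))
    have e3 := mu_Ioo hm (le_refl 0) hw hwθ.le
    rw [e1, e2, e3]
    have hθw : (0:ℝ) ≤ th m * w := mul_nonneg hθ.le hw
    have hθθ : (0:ℝ) < th m * th m := by positivity
    have hB : 0 ≤ Real.log (1 + th m * w) := Real.log_nonneg (by linarith)
    have hAB : Real.log (1 + th m * w) ≤ Real.log (1 + th m * th m) := by
      apply Real.log_le_log (by linarith)
      nlinarith
    have h0 : Real.log (1 + th m * 0) = 0 := by norm_num
    rw [h0]
    rw [show (Real.log (1 + th m * th m) - 0)/th m =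
        (Real.log (1 + th m * th m) - Real.log (1 + th m * w))/th m +
        (Real.log (1 + th m * w) - 0)/th m by ring]
    rw [ENNReal.ofReal_add (div_nonneg (by linarith) hθ.le) (div_nonneg (by linarith) hθ.le)]
    exact ENNReal.add_sub_cancel_left ENNReal.ofReal_ne_top
  · -- w ≥ θ
    have h1 : T m ⁻¹' Set.Iic w ∩ Set.Ioo 0 (th m) = Set.Ioo 0 (th m) := by
      apply Set.inter_eq_right.mpr
      intro x hx
      exact le_trans (T_mem hm hx).2.le hwθ
    have h2 : Set.Iic w ∩ Set.Ioo 0 (th m) = Set.Ioo 0 (th m) := by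
      apply Set.inter_eq_right.mpr
      intro x hx
      exact le_trans hx.2.le hwθ
    rw [mu_inter_Ioo (hT measurableSet_Iic), h1, mu_inter_Ioo measurableSet_Iic, h2]


lemma summable_aux {ε : ℝ} (hε : 0 < ε) :
    Summable (fun n : ℕ => 1 / ((n:ℝ) * Real.log n ^ ((1:ℝ) + ε))) := by
  set P : ℝ := 1 + ε with hP
  have hP1 : 1 < P := by rw [hP]; linarith
  have hP0 : 0 < P := by linarith
  have hlog2 : 0 < Real.log 2 := Real.log_pos (by norm_num)
  -- monotonicity of x * (log x)^P on [2, ∞)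
  have hmono : ∀ x y : ℝ, 2 ≤ x → x ≤ y → x * Real.log x ^ P ≤ y * Real.log y ^ P := by
    intro x y hx hxy
    have hlx : 0 ≤ Real.log x := Real.log_nonneg (by linarith)
    have hly : Real.log x ≤ Real.log y := Real.log_le_log (by linarith) hxy
    apply mul_le_mul hxy (Real.rpow_le_rpow hlx hly hP0.le) (Real.rpow_nonneg hlx P) (by linarith)
  have hposden : ∀ x : ℝ, 2 ≤ x → 0 < x * Real.log x ^ P := by
    intro x hx
    have : 0 < Real.log x := Real.log_pos (by linarith)
    have := Real.rpow_pos_of_pos this P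
    nlinarith
  set F : ℕ → ℝ := fun n => if n ≤ 1 then 1/(2 * Real.log 2 ^ P) else 1/((n:ℝ) * Real.log n ^ P)
    with hF
  have hF_nonneg : ∀ n, 0 ≤ F n := by
    intro n
    simp only [hF]
    split_ifs with h
    · positivity
    · have h2 : (2:ℝ) ≤ (n:ℝ) := by exact_mod_cast Nat.lt_of_not_le h
      exact le_of_lt (one_div_pos.mpr (hposden _ h2))
  have hF_mono : ∀ ⦃k n : ℕ⦄, 0 < k → k ≤ n → F n ≤ F k := by
    intro k n hk hkn
    simp only [hF]
    split_ifs with h1 h2 h2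
    · exact le_refl _
    · exact absurd (le_trans hkn h1) h2
    · -- k ≤ 1 < n
      have h2' : (2:ℝ) ≤ (n:ℝ) := by exact_mod_cast Nat.lt_of_not_le h1
      apply one_div_le_one_div_of_le (by positivity)
      have := hmono 2 (n:ℝ) (le_refl 2) h2'
      simpa using this
    · -- 2 ≤ k ≤ n
      have hk2 : (2:ℝ) ≤ (k:ℝ) := by exact_mod_cast Nat.lt_of_not_le h2
      have hkn' : (k:ℝ) ≤ (n:ℝ) := by exact_mod_cast hkn
      exact one_div_le_one_div_of_le (hposden _ hk2) (hmono _ _ hk2 hkn')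
  have hcond : Summable (fun k : ℕ => (2:ℝ) ^ k * F (2 ^ k)) := by
    apply (summable_nat_add_iff 1).1
    have hbase : Summable (fun n : ℕ => (1/ Real.log 2 ^ P) * (1/((n:ℝ)+1) ^ P)) := by
      apply Summable.mul_left
      have h0 : Summable (fun n : ℕ => 1/((n:ℝ)) ^ P) := Real.summable_one_div_nat_rpow.mpr hP1
      have := (summable_nat_add_iff 1).2 h0
      apply this.congr
      intro n
      push_cast
      ring
    apply hbase.congr
    intro n
    have h2n : 2 ≤ 2 ^ (n+1) := by
      calc 2 = 2^1 := (pow_one 2).symm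
        _ ≤ 2^(n+1) := Nat.pow_le_pow_right (by norm_num) (by omega)
    simp only [hF]
    rw [if_neg (by omega)]
    have hcast : ((2^(n+1) : ℕ) : ℝ) = (2:ℝ)^(n+1) := by push_cast; ring
    rw [hcast, Real.log_pow]
    have hlogc : ((n:ℝ)+1) * Real.log 2 = ((n+1:ℕ):ℝ) * Real.log 2 := by push_cast; ring
    have hrp : (((n+1:ℕ):ℝ) * Real.log 2) ^ P = ((n:ℝ)+1)^P * Real.log 2 ^ P := by
      rw [← hlogc, Real.mul_rpow (by positivity) hlog2.le]
    rw [show ((n+1:ℕ):ℝ) * Real.log 2 = ((n:ℝ)+1) * Real.log 2 by push_cast; ring] at hrp ⊢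
    rw [hrp]
    have hpow : (0:ℝ) < (2:ℝ)^(n+1) := by positivity
    field_simp
  have hFsummable : Summable F := (summable_condensed_iff_of_nonneg hF_nonneg hF_mono).mp hcond
  apply Summable.of_nonneg_of_le _ _ hFsummable
  · intro n
    match n with
    | 0 => simp [Real.zero_rpow hP0.ne']
    | 1 => simp [Real.zero_rpow hP0.ne']
    | (k+2) =>
      have h2 : (2:ℝ) ≤ ((k+2:ℕ):ℝ) := by push_cast; linarith
      exact le_of_lt (one_div_pos.mpr (hposden _ h2))
  · intro n
    match n with
    | 0 => simpa [Real.zero_rpow hP0.ne'] using hF_nonneg 0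
    | 1 => simpa [Real.zero_rpow hP0.ne'] using hF_nonneg 1
    | (k+2) =>
      simp only [hF]
      rw [if_neg (by omega)]



end Aux

/-- For every ε > 0 and a.e. x ∈ (0,θ), a_n(x) < n·(log n)^{1+ε} for all large n. -/
theorem stmt_11 (m : ℕ) (hm : 2 ≤ m) (ε : ℝ) (hε : 0 < ε) :
    ∀ᵐ x ∂(volume.restrict (Set.Ioo 0 (th m))),
      ∀ᶠ n : ℕ in atTop, (a m n x : ℝ) < (n : ℝ) * Real.log n ^ ((1 : ℝ) + ε) := by
  have hθ := th_pos hm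
  set P : ℝ := 1 + ε with hPdef
  set c : ℕ → ℝ := fun N => (N:ℝ) * Real.log N ^ P with hc
  -- c N ≥ 1 for N ≥ 3
  have hc1 : ∀ N : ℕ, 3 ≤ N → 1 ≤ c N := by
    intro N hN
    have hN3 : (3:ℝ) ≤ (N:ℝ) := by exact_mod_cast hN
    have hexp : Real.exp 1 ≤ 3 := by
      have := Real.exp_one_lt_d9
      linarith
    have hlog3 : 1 ≤ Real.log 3 := by
      rw [Real.le_log_iff_exp_le (by norm_num)]
      exact hexp
    have hlogN : 1 ≤ Real.log N := le_trans hlog3 (Real.log_le_log (by norm_num) hN3)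
    have hrp : 1 ≤ Real.log N ^ P := by
      calc (1:ℝ) = 1 ^ P := (Real.one_rpow P).symm
        _ ≤ Real.log N ^ P := Real.rpow_le_rpow (by norm_num) hlogN (by positivity)
    calc (1:ℝ) ≤ 3 * 1 := by norm_num
      _ ≤ (N:ℝ) * Real.log N ^ P := mul_le_mul hN3 hrp (by norm_num) (by positivity)
  have hcpos : ∀ N : ℕ, 3 ≤ N → 0 < c N := fun N hN => lt_of_lt_of_le one_pos (hc1 N hN)
  -- the bad sets
  set A : ℕ → Set ℝ := fun n =>
    {x | x ∈ Set.Ioo 0 (th m) ∧ c (n+3) ≤ (a m (n+3) x : ℝ)} with hA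
  -- A n is contained in the preimage of a small interval under T^[n+2]
  have hsub : ∀ n : ℕ, A n ⊆ (T m)^[n+2] ⁻¹' (Set.Iic (1/(c (n+3) * th m))) := by
    intro n x hx
    obtain ⟨hxI, hxc⟩ := hx
    have hcn : 1 ≤ c (n+3) := hc1 _ (by omega)
    set y : ℝ := (T m)^[n+2] x with hy
    have hidx : n + 3 - 1 = n + 2 := by omega
    have hax : (a m (n+3) x : ℝ) = (⌊1 / (y * th m)⌋₊ : ℝ) := by
      rw [a, hidx]
    rw [hax] at hxc
    have hfl1 : 1 ≤ ⌊1 / (y * th m)⌋₊ := by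
      by_contra h
      push_neg at h
      have h0 : ⌊1 / (y * th m)⌋₊ = 0 := by omega
      rw [h0] at hxc
      push_cast at hxc
      linarith
    have harg : 0 ≤ 1 / (y * th m) := by
      by_contra h
      push_neg at h
      rw [Nat.floor_of_nonpos h.le] at hfl1
      omega
    have hle : c (n+3) ≤ 1 / (y * th m) := le_trans hxc (Nat.floor_le harg)
    have hargpos : 0 < 1 / (y * th m) := lt_of_lt_of_le (by linarith) hle
    have hyθ : 0 < y * th m := one_div_pos.mp hargpos
    have hkey : c (n+3) * (y * th m) ≤ 1 := by
      rw [← le_div_iff₀ hyθ]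
      exact hle
    simp only [Set.mem_preimage, Set.mem_Iic, ← hy]
    rw [le_div_iff₀ (by positivity)]
    calc y * (c (n+3) * th m) = c (n+3) * (y * th m) := by ring
      _ ≤ 1 := hkey
  -- measure bound
  have hMP : MeasurePreserving (T m) (mu m) (mu m) := ⟨measurable_T, T_invariance hm⟩
  have hbound : ∀ n : ℕ, volume.restrict (Set.Ioo 0 (th m)) (A n) ≤
      ENNReal.ofReal ((2 / th m) * (1 / c (n+3))) := by
    intro n
    calc volume.restrict (Set.Ioo 0 (th m)) (A n) ≤ 2 * mu m (A n) := lam_le_two_mu hm _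
      _ ≤ 2 * mu m ((T m)^[n+2] ⁻¹' (Set.Iic (1/(c (n+3) * th m)))) :=
          mul_le_mul_right (measure_mono (hsub n)) 2
      _ = 2 * mu m (Set.Iic (1/(c (n+3) * th m))) := by
          rw [(hMP.iterate (n+2)).measure_preimage measurableSet_Iic.nullMeasurableSet]
      _ ≤ 2 * ENNReal.ofReal (1/(c (n+3) * th m)) :=
          mul_le_mul_right (mu_Iic_le _) 2
      _ = ENNReal.ofReal ((2 / th m) * (1 / c (n+3))) := by
          rw [← ENNReal.ofReal_ofNat, ← ENNReal.ofReal_mul (by norm_num)]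
          congr 1
          ring
  -- summability of the bounds
  have hsummable : Summable (fun n : ℕ => (2 / th m) * (1 / c (n+3))) := by
    apply Summable.mul_left
    have := summable_aux hε
    exact (summable_nat_add_iff 3).2 this
  have hnonneg : ∀ n : ℕ, 0 ≤ (2 / th m) * (1 / c (n+3)) := by
    intro n
    have := hcpos (n+3) (by omega)
    positivity
  have htsum : (∑' n, volume.restrict (Set.Ioo 0 (th m)) (A n)) ≠ ⊤ := by
    apply ne_top_of_le_ne_top _ (Summable.tsum_le_tsum hbound ENNReal.summable ENNReal.summable)
    rw [← ENNReal.ofReal_tsum_of_nonneg hnonneg hsummable]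
    exact ENNReal.ofReal_ne_top
  -- Borel-Cantelli
  have hBC := ae_eventually_notMem htsum
  filter_upwards [hBC, ae_restrict_mem measurableSet_Ioo] with x hev hxI
  rw [eventually_atTop] at hev ⊢
  obtain ⟨n₀, hn₀⟩ := hev
  refine ⟨n₀ + 3, fun N hN => ?_⟩
  have h3 : 3 ≤ N := by omega
  set k := N - 3 with hk
  have hkN : k + 3 = N := by omega
  have hnotin := hn₀ k (by omega)
  rw [hA] at hnotin
  simp only [Set.mem_setOf_eq, not_and] at hnotin
  have := hnotin hxI
  push_neg at this
  rw [hkN] at this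
  exact this


end Theta
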